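/- arXiv:0803.3062 — 3 statements merged into one kernel-verified Lean document; each statement's English description precedes it below -/
import Mathlib

section
/- Let M be a compact Riemannian manifold with boundary that is simple (any two points are joined by a unique geodesic, depending smoothly on endpoints, contained in M). Let K ⊆ M be a closed geodesically convex subset (for any two points of K, the geodesic segment joining them lies in K). Then for every point x ∈ M \ K, there exists a maximal geodesic through x that does not intersect K. -/
/-- Let `M` be a compact (simple) Riemannian manifold with boundary, in
which any two points are joined by a unique geodesic contained in `M`.  We model the
geodesic structure by a continuous family `geo x ξ : ℝ → ℝⁿ` of unit-speed maximal
geodesics through `x ∈ M` in the unit direction `ξ`, with `geo x ξ 0 = x`, with the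
reversal property `geo x (−ξ) t = geo x ξ (−t)`, and with uniformly bounded
parameter interval inside the compact set `M` (finite length).  A closed set
`K ⊆ M` is geodesically convex: whenever two points of a geodesic lie in `K`, the
whole geodesic segment between them lies in `K` (uniqueness of connecting
geodesics).  Then through every `x ∈ M \ K` there is a maximal geodesic that does
not intersect `K`. -/
theorem geodesic_avoiding_convex_set {n : ℕ} (hn : 2 ≤ n)
    (M : Set (EuclideanSpace ℝ (Fin n))) (hMcp : IsCompact M)
    (geo : EuclideanSpace ℝ (Fin n) → EuclideanSpace ℝ (Fin n) → ℝ →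
      EuclideanSpace ℝ (Fin n))
    (hgeo_cont : Continuous fun q : EuclideanSpace ℝ (Fin n) ×
      EuclideanSpace ℝ (Fin n) × ℝ => geo q.1 q.2.1 q.2.2)
    (hgeo_zero : ∀ x ξ, geo x ξ 0 = x)
    (hgeo_neg : ∀ x ξ t, geo x (-ξ) t = geo x ξ (-t))
    (T : ℝ) (hT : 0 < T)
    (hgeo_bdd : ∀ x ∈ M, ∀ ξ : EuclideanSpace ℝ (Fin n), ‖ξ‖ = 1 →
      ∀ t : ℝ, geo x ξ t ∈ M → |t| ≤ T)
    (K : Set (EuclideanSpace ℝ (Fin n))) (hKM : K ⊆ M) (hKcl : IsClosed K)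
    (hKconv : ∀ x ∈ M, ∀ ξ : EuclideanSpace ℝ (Fin n), ‖ξ‖ = 1 →
      ∀ t₁ t₂ : ℝ, t₁ ≤ t₂ → geo x ξ t₁ ∈ K → geo x ξ t₂ ∈ K →
        ∀ t ∈ Set.Icc t₁ t₂, geo x ξ t ∈ K)
    (x : EuclideanSpace ℝ (Fin n)) (hx : x ∈ M \ K) :
    ∃ ξ : EuclideanSpace ℝ (Fin n), ‖ξ‖ = 1 ∧ ∀ t : ℝ, geo x ξ t ∉ K := by
  let E := EuclideanSpace ℝ (Fin n)
  obtain ⟨hxM, hxK⟩ := hx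
  -- directions whose forward ray meets K
  set L : Set E := {ξ | ‖ξ‖ = 1 ∧ ∃ t, 0 ≤ t ∧ geo x ξ t ∈ K} with hLdef
  -- L is compact (hence closed)
  have hLcp : IsCompact L := by
    have hS : IsCompact {p : E × ℝ | ‖p.1‖ = 1 ∧ p.2 ∈ Set.Icc 0 T ∧ geo x p.1 p.2 ∈ K} := by
      have hsub : {p : E × ℝ | ‖p.1‖ = 1 ∧ p.2 ∈ Set.Icc 0 T ∧ geo x p.1 p.2 ∈ K} ⊆
          (Metric.sphere (0 : E) 1) ×ˢ (Set.Icc 0 T) := by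
        rintro ⟨ξ, t⟩ ⟨h1, h2, _⟩
        exact ⟨by simpa [mem_sphere_zero_iff_norm] using h1, h2⟩
      refine ((isCompact_sphere (0 : E) 1).prod isCompact_Icc).of_isClosed_subset ?_ hsub
      have hc : Continuous fun p : E × ℝ => geo x p.1 p.2 :=
        hgeo_cont.comp (by fun_prop : Continuous fun p : E × ℝ => ((x, p.1, p.2) : E × E × ℝ))
      exact (isClosed_eq (continuous_norm.comp continuous_fst) continuous_const).inter
        ((isClosed_Icc.preimage continuous_snd).inter (hKcl.preimage hc))
    have himg : L = Prod.fst '' {p : E × ℝ | ‖p.1‖ = 1 ∧ p.2 ∈ Set.Icc 0 T ∧ geo x p.1 p.2 ∈ K} := by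
      ext ξ
      constructor
      · rintro ⟨h1, t, ht0, htK⟩
        refine ⟨(ξ, t), ⟨h1, ⟨ht0, ?_⟩, htK⟩, rfl⟩
        have := hgeo_bdd x hxM ξ h1 t (hKM htK)
        exact (abs_le.mp this).2
      · rintro ⟨⟨ξ', t⟩, ⟨h1, ht, htK⟩, rfl⟩
        exact ⟨h1, t, ht.1, htK⟩
    rw [himg]
    exact hS.image continuous_fst
  have hLcl : IsClosed L := hLcp.isClosed
  -- the reflected set
  set L' : Set E := (fun ξ => -ξ) ⁻¹' L with hL'def
  have hL'cl : IsClosed L' := hLcl.preimage continuous_neg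
  -- disjointness on the sphere
  have hdisj : ∀ ξ : E, ξ ∈ L → ξ ∈ L' → False := by
    intro ξ hLm hL'm
    obtain ⟨h1, t₂, ht₂0, ht₂K⟩ := hLm
    have hneg : -ξ ∈ L := hL'm
    obtain ⟨-, t₁, ht₁0, ht₁K⟩ := hneg
    rw [hgeo_neg] at ht₁K
    have h0 : geo x ξ 0 ∈ K := by
      refine hKconv x hxM ξ h1 (-t₁) t₂ (by linarith) ht₁K ht₂K 0 ⟨by linarith, ht₂0⟩
    rw [hgeo_zero] at h0
    exact hxK h0
  by_contra hcon
  push_neg at hcon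
  -- every unit direction's full geodesic meets K, so the sphere is covered by L ∪ L'
  have hcover : Metric.sphere (0 : E) 1 ⊆ L ∪ L' := by
    intro ξ hξ
    rw [mem_sphere_zero_iff_norm] at hξ
    obtain ⟨t, htK⟩ := hcon ξ hξ
    rcases le_or_gt 0 t with ht | ht
    · exact Or.inl ⟨hξ, t, ht, htK⟩
    · refine Or.inr (show -ξ ∈ L from ?_)
      refine ⟨by simpa using hξ, -t, by linarith, ?_⟩
      rw [hgeo_neg, neg_neg]
      exact htK
  -- the sphere is connected since n ≥ 2
  have hrank : 1 < Module.rank ℝ E := by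
    rw [← Module.finrank_eq_rank ℝ E]
    have : Module.finrank ℝ E = n := finrank_euclideanSpace_fin
    rw [this]
    exact_mod_cast lt_of_lt_of_le (by norm_num) hn
  have hconn : IsConnected (Metric.sphere (0 : E) 1) :=
    isConnected_sphere hrank 0 zero_le_one
  -- pick a point on the sphere
  have hne : (Metric.sphere (0 : E) 1).Nonempty := hconn.nonempty
  obtain ⟨ξ₀, hξ₀⟩ := hne
  have hξ₀n : -ξ₀ ∈ Metric.sphere (0 : E) 1 := by
    rw [mem_sphere_zero_iff_norm] at hξ₀ ⊢; simpa using hξ₀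
  -- both L and L' meet the sphere
  have hboth : (Metric.sphere (0 : E) 1 ∩ L).Nonempty ∧
      (Metric.sphere (0 : E) 1 ∩ L').Nonempty := by
    rcases hcover hξ₀ with h | h
    · exact ⟨⟨ξ₀, hξ₀, h⟩, ⟨-ξ₀, hξ₀n, by show -(-ξ₀) ∈ L; rw [neg_neg]; exact h⟩⟩
    · exact ⟨⟨-ξ₀, hξ₀n, h⟩, ⟨ξ₀, hξ₀, h⟩⟩
  obtain ⟨ξ, -, hL, hL'⟩ := isPreconnected_closed_iff.mp hconn.isPreconnected L L'
    hLcl hL'cl hcover hboth.1 hboth.2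
  exact hdisj ξ hL hL'
end

section
/- Let B be the closed unit ball in ℝⁿ with n ≥ 2, and let K ⊆ B be a closed convex subset. Then for every x ∈ B \ K there exists a line through x that does not intersect K. -/
/-- Let `B` be the closed unit ball in `ℝⁿ` with `n ≥ 2`, and let
`K ⊆ B` be a closed convex subset. Then for every `x ∈ B \ K` there exists a line
through `x` that does not intersect `K`. -/
theorem line_avoiding_convex_set {n : ℕ} (hn : 2 ≤ n)
    (K : Set (EuclideanSpace ℝ (Fin n)))
    (hKB : K ⊆ Metric.closedBall 0 1) (hKcl : IsClosed K) (hKcv : Convex ℝ K)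
    (x : EuclideanSpace ℝ (Fin n))
    (hx : x ∈ Metric.closedBall (0 : EuclideanSpace ℝ (Fin n)) 1 \ K) :
    ∃ ξ : EuclideanSpace ℝ (Fin n), ‖ξ‖ = 1 ∧ ∀ t : ℝ, x + t • ξ ∉ K := by
  rcases K.eq_empty_or_nonempty with hK | hK
  · have : (0 : ℕ) < n := by omega
    refine ⟨EuclideanSpace.single ⟨0, this⟩ 1, ?_, ?_⟩
    · simp [EuclideanSpace.norm_single]
    · simp [hK]
  · -- separate x from K
    obtain ⟨f, c, hfx, hfK⟩ :=
      geometric_hahn_banach_point_closed hKcv hKcl hx.2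
    -- f ≠ 0 since it separates
    obtain ⟨b, hb⟩ := hK
    have hf0 : (f : EuclideanSpace ℝ (Fin n) →ₗ[ℝ] ℝ) ≠ 0 := by
      intro h
      have h1 : f x = 0 := by
        have := LinearMap.congr_fun h x; simpa using this
      have h2 : f b = 0 := by
        have := LinearMap.congr_fun h b; simpa using this
      have := hfK b hb
      linarith
    -- kernel has a nonzero vector
    have hdim : 0 < Module.finrank ℝ (LinearMap.ker (f : EuclideanSpace ℝ (Fin n) →ₗ[ℝ] ℝ)) := by
      have hrange : Module.finrank ℝ
          (LinearMap.range (f : EuclideanSpace ℝ (Fin n) →ₗ[ℝ] ℝ)) ≤ 1 := by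
        have := Submodule.finrank_le (LinearMap.range (f : EuclideanSpace ℝ (Fin n) →ₗ[ℝ] ℝ))
        simpa using this
      have htot : Module.finrank ℝ (EuclideanSpace ℝ (Fin n)) = n := by
        simp
      have hadd := LinearMap.finrank_range_add_finrank_ker
        (f : EuclideanSpace ℝ (Fin n) →ₗ[ℝ] ℝ)
      omega
    obtain ⟨⟨v, hv⟩, hvne⟩ := Module.finrank_pos_iff_exists_ne_zero.mp hdim
    have hv0 : v ≠ 0 := by
      intro h; exact hvne (Subtype.ext h)
    refine ⟨‖v‖⁻¹ • v, ?_, ?_⟩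
    · rw [norm_smul]
      simp [norm_ne_zero_iff.mpr hv0, inv_mul_cancel₀ (norm_ne_zero_iff.mpr hv0)]
    · intro t ht
      have hfv : f v = 0 := hv
      have : f (x + t • (‖v‖⁻¹ • v)) = f x := by
        simp [map_add, map_smul, hfv]
      have h2 := hfK _ ht
      rw [this] at h2
      linarith
end

section
/- Let B be the closed unit ball in ℝⁿ with n ≥ 2, let K ⊆ interior(B) be closed and convex, and let x ∈ B \ K. Then the chord through x avoiding K (which exists by the avoidance lemma) can be continuously deformed, through chords of B avoiding K, to a point of ∂B. Concretely: there exist continuous maps a, b : [0,1] → ∂B such that the chord [a(0), b(0)] contains x, every chord [a(t), b(t)] is disjoint from K, and a(1) = b(1). -/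
set_option maxHeartbeats 1000000

open RealInnerProductSpace

private lemma chord_aux {E : Type*} [NormedAddCommGroup E] [InnerProductSpace ℝ E]
    (K : Set E) (x u v : E) (hu : ‖u‖ = 1) (hv : ‖v‖ = 1) (huv : ⟪u, v⟫ = 0)
    (hx : ‖x‖ < 1) (hsep : ∀ y ∈ K, ⟪u, y⟫ < ⟪u, x⟫) :
    ∃ a b : ℝ → E,
      ContinuousOn a (Set.Icc 0 1) ∧ ContinuousOn b (Set.Icc 0 1) ∧
      (∀ t ∈ Set.Icc (0:ℝ) 1, ‖a t‖ = 1 ∧ ‖b t‖ = 1) ∧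
      x ∈ segment ℝ (a 0) (b 0) ∧
      (∀ t ∈ Set.Icc (0:ℝ) 1, Disjoint (segment ℝ (a t) (b t)) K) ∧
      a 1 = b 1 := by
  set ξ : ℝ := ⟪u, x⟫ with hξdef
  have hxnn : (0:ℝ) ≤ ‖x‖ := norm_nonneg x
  have hξle : |ξ| < 1 := by
    calc |ξ| ≤ ‖u‖ * ‖x‖ := abs_real_inner_le_norm u x
    _ < 1 := by rw [hu, one_mul]; exact hx
  have hξlt : ξ < 1 := (abs_lt.mp hξle).2
  have hξgt : -1 < ξ := (abs_lt.mp hξle).1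
  have hξsq : 0 < 1 - ξ ^ 2 := by nlinarith
  set w : E := x - ξ • u with hwdef
  have huu : ⟪u, u⟫ = 1 := by
    rw [real_inner_self_eq_norm_sq, hu]; norm_num
  have huw : ⟪u, w⟫ = 0 := by
    simp [hwdef, inner_sub_right, real_inner_smul_right, huu, hu, hξdef]
  set m : ℝ := ⟪w, v⟫ with hmdef
  set D : ℝ := m ^ 2 + 1 - ‖x‖ ^ 2 with hDdef
  have hD : 0 < D := by rw [hDdef]; nlinarith
  have hsD : Real.sqrt D ^ 2 = m ^ 2 + 1 - ‖x‖ ^ 2 := by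
    rw [Real.sq_sqrt hD.le, hDdef]
  have hsDpos : 0 < Real.sqrt D := Real.sqrt_pos.mpr hD
  set τp : ℝ := -m + Real.sqrt D with hτp
  set τm : ℝ := -m - Real.sqrt D with hτm
  set p : E := w + τp • v with hpdef
  set q : E := w + τm • v with hqdef
  have hup : ⟪u, p⟫ = 0 := by
    simp [hpdef, inner_add_right, real_inner_smul_right, huw, huv]
  have huq : ⟪u, q⟫ = 0 := by
    simp [hqdef, inner_add_right, real_inner_smul_right, huw, huv]
  have hwsq : ‖w‖ ^ 2 = ‖x‖ ^ 2 - ξ ^ 2 := by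
    have h1 := norm_sub_sq_real x (ξ • u)
    have h2 : ⟪x, u⟫ = ξ := by rw [real_inner_comm]
    rw [real_inner_smul_right, norm_smul, hu, mul_one, Real.norm_eq_abs, sq_abs,
      h2] at h1
    rw [hwdef, h1]; ring
  have hpsq : ‖p‖ ^ 2 = 1 - ξ ^ 2 := by
    have h1 := norm_add_sq_real w (τp • v)
    rw [real_inner_smul_right, norm_smul, hv, mul_one, Real.norm_eq_abs, sq_abs,
      ← hmdef] at h1
    rw [hpdef, h1, hwsq, hτp]
    linear_combination hsD
  have hqsq : ‖q‖ ^ 2 = 1 - ξ ^ 2 := by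
    have h1 := norm_add_sq_real w (τm • v)
    rw [real_inner_smul_right, norm_smul, hv, mul_one, Real.norm_eq_abs, sq_abs,
      ← hmdef] at h1
    rw [hqdef, h1, hwsq, hτm]
    linear_combination hsD
  -- the deformation
  set Ξ : ℝ → ℝ := fun t => ξ + t * (1 - ξ) with hΞ
  set Λ : ℝ → ℝ := fun t => Real.sqrt ((1 - Ξ t ^ 2) / (1 - ξ ^ 2)) with hΛ
  set a : ℝ → E := fun t => Ξ t • u + Λ t • p with ha
  set b : ℝ → E := fun t => Ξ t • u + Λ t • q with hb
  have hΞmem : ∀ t ∈ Set.Icc (0:ℝ) 1, ξ ≤ Ξ t ∧ Ξ t ≤ 1 := by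
    intro t ht
    simp only [hΞ]
    constructor
    · nlinarith [ht.1, ht.2]
    · nlinarith [ht.1, ht.2]
  have hΞsq : ∀ t ∈ Set.Icc (0:ℝ) 1, 0 ≤ 1 - Ξ t ^ 2 := by
    intro t ht
    have h := hΞmem t ht
    have hgt : (0:ℝ) < 1 + Ξ t := by linarith [h.1]
    have hkey := mul_nonneg (sub_nonneg.mpr h.2) hgt.le
    nlinarith [hkey]
  have hΛsq : ∀ t ∈ Set.Icc (0:ℝ) 1, Λ t ^ 2 = (1 - Ξ t ^ 2) / (1 - ξ ^ 2) := by
    intro t ht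
    rw [hΛ]
    exact Real.sq_sqrt (div_nonneg (hΞsq t ht) hξsq.le)
  have hcontΞ : Continuous Ξ := by
    rw [hΞ]; fun_prop
  have hcontΛ : Continuous Λ := by
    rw [hΛ]
    exact Real.continuous_sqrt.comp ((continuous_const.sub (hcontΞ.pow 2)).div_const _)
  have hcont : ∀ r : E, Continuous (fun t : ℝ => Ξ t • u + Λ t • r) := fun r =>
    (hcontΞ.smul continuous_const).add (hcontΛ.smul continuous_const)
  have hnorm : ∀ r : E, ‖r‖ ^ 2 = 1 - ξ ^ 2 → ⟪u, r⟫ = 0 →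
      ∀ t ∈ Set.Icc (0:ℝ) 1, ‖Ξ t • u + Λ t • r‖ = 1 := by
    intro r hr hur t ht
    have h1 : ‖Ξ t • u + Λ t • r‖ ^ 2 = ‖Ξ t • u‖ ^ 2 + 2 * ⟪Ξ t • u, Λ t • r⟫ + ‖Λ t • r‖ ^ 2 :=
      norm_add_sq_real _ _
    have h2 : ‖Ξ t • u + Λ t • r‖ ^ 2 = 1 := by
      rw [h1, real_inner_smul_left, real_inner_smul_right, hur, norm_smul, norm_smul, hu,
        mul_one, Real.norm_eq_abs, Real.norm_eq_abs, mul_pow, sq_abs, sq_abs, hΛsq t ht, hr]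
      field_simp
      ring
    have h3 : ‖Ξ t • u + Λ t • r‖ = Real.sqrt (‖Ξ t • u + Λ t • r‖ ^ 2) :=
      (Real.sqrt_sq (norm_nonneg _)).symm
    rw [h3, h2, Real.sqrt_one]
  refine ⟨a, b, ((hcont p).continuousOn), ((hcont q).continuousOn), ?_, ?_, ?_, ?_⟩
  · intro t ht
    exact ⟨hnorm p hpsq hup t ht, hnorm q hqsq huq t ht⟩
  · -- x ∈ segment (a 0) (b 0)
    have hΞ0 : Ξ 0 = ξ := by simp [hΞ]
    have hΛ0 : Λ 0 = 1 := by
      rw [hΛ]; simp only [hΞ0]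
      rw [div_self hξsq.ne', Real.sqrt_one]
    have ha0 : a 0 = ξ • u + p := by rw [ha]; simp only [hΞ0, hΛ0, one_smul]
    have hb0 : b 0 = ξ • u + q := by rw [hb]; simp only [hΞ0, hΛ0, one_smul]
    have hτprod : τp * τm = ‖x‖ ^ 2 - 1 := by
      rw [hτp, hτm]
      linear_combination -hsD
    have hτpm : τp - τm = 2 * Real.sqrt D := by rw [hτp, hτm]; ring
    have hτppos : 0 < τp := by nlinarith
    have hτmneg : τm < 0 := by nlinarith
    set θ : ℝ := -τm / (τp - τm) with hθ
    have hθ0 : 0 ≤ θ := by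
      rw [hθ]; apply div_nonneg <;> nlinarith
    have hθ1 : θ ≤ 1 := by
      rw [hθ, div_le_one (by nlinarith)]; nlinarith
    refine ⟨θ, 1 - θ, hθ0, by linarith, by ring, ?_⟩
    rw [ha0, hb0, hpdef, hqdef]
    have hcomb : θ * τp + (1 - θ) * τm = 0 := by
      have hne : τp - τm ≠ 0 := by exact ne_of_gt (by linarith)
      rw [hθ]; field_simp; ring
    have hmod : θ • (ξ • u + (w + τp • v)) + (1 - θ) • (ξ • u + (w + τm • v))
        = ξ • u + w + (θ * τp + (1 - θ) * τm) • v := by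
      module
    rw [hmod, hcomb, zero_smul, add_zero, hwdef]
    abel
  · -- disjointness
    intro t ht
    rw [Set.disjoint_left]
    rintro z hz hzK
    obtain ⟨s, r, hs, hr, hsr, hzeq⟩ := hz
    have hinner : ⟪u, z⟫ = Ξ t := by
      rw [← hzeq, ha, hb]
      simp only [inner_add_right, real_inner_smul_right, huu, hup, huq]
      linear_combination (Ξ t) * hsr
    have h1 : ⟪u, z⟫ < ξ := hsep z hzK
    have h2 := (hΞmem t ht).1
    rw [hinner] at h1
    linarith
  · -- a 1 = b 1
    have hΞ1 : Ξ 1 = 1 := by simp [hΞ]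
    have hΛ1 : Λ 1 = 0 := by
      rw [hΛ]; simp only [hΞ1]
      norm_num
    rw [ha, hb]; simp only [hΞ1, hΛ1, zero_smul, add_zero, one_smul]

/-- Let `B` be the closed unit ball in `ℝⁿ` (`n ≥ 2`), `K ⊆ int B`
closed and convex, `x ∈ B \ K`. Then a chord of `B` through `x` avoiding `K` can be
continuously deformed, through chords avoiding `K`, to a point of `∂B`: there are
continuous `a, b : [0,1] → ∂B` with `x` on the chord `[a(0), b(0)]`, every chord
`[a(t), b(t)]` disjoint from `K`, and `a(1) = b(1)`. -/
theorem chord_deformation_to_boundary {n : ℕ} (hn : 2 ≤ n)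
    (K : Set (EuclideanSpace ℝ (Fin n)))
    (hKB : K ⊆ Metric.ball 0 1) (hKcl : IsClosed K) (hKcv : Convex ℝ K)
    (x : EuclideanSpace ℝ (Fin n))
    (hx : x ∈ Metric.closedBall (0 : EuclideanSpace ℝ (Fin n)) 1 \ K) :
    ∃ a b : ℝ → EuclideanSpace ℝ (Fin n),
      ContinuousOn a (Set.Icc 0 1) ∧ ContinuousOn b (Set.Icc 0 1) ∧
      (∀ t ∈ Set.Icc (0:ℝ) 1, ‖a t‖ = 1 ∧ ‖b t‖ = 1) ∧
      x ∈ segment ℝ (a 0) (b 0) ∧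
      (∀ t ∈ Set.Icc (0:ℝ) 1, Disjoint (segment ℝ (a t) (b t)) K) ∧
      a 1 = b 1 := by
  obtain ⟨hxB, hxK⟩ := hx
  have hxnorm : ‖x‖ ≤ 1 := by
    simpa [mem_closedBall_iff_norm] using hxB
  rcases eq_or_lt_of_le hxnorm with heq | hlt
  · -- x on the sphere: constant chord {x}
    refine ⟨fun _ => x, fun _ => x, continuousOn_const, continuousOn_const,
      fun t _ => ⟨heq, heq⟩, ?_, fun t _ => ?_, rfl⟩
    · rw [segment_same]; exact rfl
    · rw [segment_same, Set.disjoint_left]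
      rintro z rfl; exact hxK
  · -- get a separating unit vector u
    have hEdim : Module.finrank ℝ (EuclideanSpace ℝ (Fin n)) = n := by
      simp [finrank_euclideanSpace]
    have hmain : ∃ u : EuclideanSpace ℝ (Fin n), ‖u‖ = 1 ∧ ∀ y ∈ K, ⟪u, y⟫ < ⟪u, x⟫ := by
      rcases Set.eq_empty_or_nonempty K with rfl | ⟨y0, hy0⟩
      · refine ⟨EuclideanSpace.single ⟨0, by omega⟩ 1, ?_, by simp⟩
        simp [EuclideanSpace.norm_single]
      · obtain ⟨f, c, hfy, hfx⟩ := geometric_hahn_banach_closed_point hKcv hKcl hxK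
        set φ := (InnerProductSpace.toDual ℝ (EuclideanSpace ℝ (Fin n))).symm f with hφ
        have hφapp : ∀ z, ⟪φ, z⟫ = f z := fun z => InnerProductSpace.toDual_symm_apply
        have hφne : φ ≠ 0 := by
          intro h
          have h1 : f y0 < c := hfy y0 hy0
          have h2 : (⟪φ, y0⟫ : ℝ) = 0 := by rw [h]; simp
          have h3 : (⟪φ, x⟫ : ℝ) = 0 := by rw [h]; simp
          rw [hφapp] at h2 h3
          linarith
        have hφpos : 0 < ‖φ‖ := norm_pos_iff.mpr hφne
        refine ⟨‖φ‖⁻¹ • φ, ?_, ?_⟩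
        · rw [norm_smul, norm_inv, norm_norm, inv_mul_cancel₀ hφpos.ne']
        · intro y hy
          rw [real_inner_smul_left, real_inner_smul_left, hφapp, hφapp]
          have h1 : f y < c := hfy y hy
          have := inv_pos.mpr hφpos
          apply mul_lt_mul_of_pos_left _ this
          linarith
    obtain ⟨u, hu, hsep⟩ := hmain
    -- get unit v orthogonal to u
    have hune : u ≠ 0 := by intro h; rw [h] at hu; simp at hu
    have hspan : Module.finrank ℝ (ℝ ∙ u) = 1 := finrank_span_singleton hune
    have hperp : 0 < Module.finrank ℝ ((ℝ ∙ u)ᗮ : Submodule ℝ (EuclideanSpace ℝ (Fin n))) := by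
      have h := (ℝ ∙ u).finrank_add_finrank_orthogonal
      rw [hspan, hEdim] at h
      omega
    have hbot : (ℝ ∙ u)ᗮ ≠ (⊥ : Submodule ℝ (EuclideanSpace ℝ (Fin n))) := by
      intro h
      rw [h] at hperp
      simp at hperp
    obtain ⟨v0, hv0mem, hv0ne⟩ := Submodule.exists_mem_ne_zero_of_ne_bot hbot
    have hv0pos : 0 < ‖v0‖ := norm_pos_iff.mpr hv0ne
    have huv0 : ⟪u, v0⟫ = 0 := hv0mem u (Submodule.mem_span_singleton_self u)
    have hvnorm : ‖(‖v0‖⁻¹ • v0 : EuclideanSpace ℝ (Fin n))‖ = 1 := by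
      rw [norm_smul, norm_inv, norm_norm, inv_mul_cancel₀ hv0pos.ne']
    have huv : ⟪u, (‖v0‖⁻¹ • v0 : EuclideanSpace ℝ (Fin n))⟫ = 0 := by
      rw [real_inner_smul_right, huv0, mul_zero]
    exact chord_aux K x u (‖v0‖⁻¹ • v0) hu hvnorm huv hlt hsep
end
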